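/- Let q be C¹ with q(x) → ∞ and limsup_{x→∞} |q'(x)|/q(x) < ∞, and assume H1. Then m'(x) = -2e^{γ(x)}∫_x^∞ e^{-γ(ξ)}dξ satisfies m'(x) = -1/q(x) + e^{γ(x)}∫_x^∞ (q'(ξ)/q(ξ)²) e^{-γ(ξ)} dξ for x large, and there exists a constant G > 0 such that |m''(x)|/|m'(x)| ≤ G for all x ≥ 0. -/

import Mathlib

open MeasureTheory Real Filter

set_option maxHeartbeats 1000000

/-- Under H1, q → ∞ and limsup |q'|/q < ∞: the integration-by-parts identity for
m'(x) = -2e^{γ(x)}∫_x^∞ e^{-γ} holds for large x, and |m''|/|m'| ≤ G on [0,∞). -/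
theorem m_prime_identity_and_ratio_bounded
    (q γ : ℝ → ℝ)
    (hq : ContDiff ℝ 1 q)
    (hγ : ∀ y, γ y = 2 * ∫ t in (0:ℝ)..y, q t)
    (H1 : ∫⁻ y in Set.Ioi (0:ℝ),
        ENNReal.ofReal (Real.exp (γ y)) *
          ∫⁻ z in Set.Ioi y, ENNReal.ofReal (Real.exp (-(γ z))) < ⊤)
    (hqtop : Tendsto q atTop atTop)
    (hq' : ∃ C : ℝ, ∀ᶠ x in atTop, |deriv q x| / q x ≤ C) :
    (∀ᶠ x in atTop,
        (-2 * Real.exp (γ x) * ∫ ξ in Set.Ioi x, Real.exp (-(γ ξ))) =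
          -(1 / q x) +
            Real.exp (γ x) *
              ∫ ξ in Set.Ioi x, deriv q ξ / q ξ ^ 2 * Real.exp (-(γ ξ))) ∧
      ∃ G > (0:ℝ), ∀ x ≥ (0:ℝ),
        |deriv (fun x => -2 * Real.exp (γ x) * ∫ ξ in Set.Ioi x, Real.exp (-(γ ξ))) x| ≤
          G * |(-2 * Real.exp (γ x) * ∫ ξ in Set.Ioi x, Real.exp (-(γ ξ)))| := by
  clear H1
  open Set in
  set f : ℝ → ℝ := fun ξ => Real.exp (-(γ ξ)) with hfdef
  have hqc : Continuous q := hq.continuous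
  have hq'c : Continuous (deriv q) := hq.continuous_deriv le_rfl
  have hγd : ∀ y, HasDerivAt γ (2 * q y) y := by
    intro y
    have h1 : HasDerivAt (fun y => ∫ t in (0:ℝ)..y, q t) (q y) y :=
      intervalIntegral.integral_hasDerivAt_right (hqc.intervalIntegrable 0 y)
        (hqc.stronglyMeasurableAtFilter _ _) hqc.continuousAt
    have h2 := h1.const_mul 2
    have : γ = fun y => 2 * ∫ t in (0:ℝ)..y, q t := funext hγ
    rw [this]; exact h2
  have hγc : Continuous γ := by
    have : Differentiable ℝ γ := fun y => (hγd y).differentiableAt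
    exact this.continuous
  have hfc : Continuous f := Real.continuous_exp.comp hγc.neg
  have hfpos : ∀ ξ, 0 < f ξ := fun ξ => Real.exp_pos _
  have hfd : ∀ ξ, HasDerivAt f (-2 * q ξ * f ξ) ξ := by
    intro ξ
    have := ((hγd ξ).neg).exp
    convert this using 1; simp [hfdef]; simp only [hfdef, Pi.neg_apply]; ring
  obtain ⟨x0, hx0⟩ : ∃ x0 : ℝ, ∀ ξ ≥ x0, 1 ≤ q ξ :=
    (hqtop.eventually_ge_atTop 1).exists_forall_of_atTop
  have hγgrow : ∀ ξ ≥ x0, γ x0 + 2 * (ξ - x0) ≤ γ ξ := by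
    intro ξ hξ
    have hsplit : γ ξ - γ x0 = 2 * ∫ t in x0..ξ, q t := by
      rw [hγ ξ, hγ x0, ← mul_sub,
        ← intervalIntegral.integral_interval_sub_left (hqc.intervalIntegrable 0 ξ)
          (hqc.intervalIntegrable 0 x0)]
    have hmono : (ξ - x0) ≤ ∫ t in x0..ξ, q t := by
      have h1 : ∫ t in x0..ξ, (1:ℝ) ≤ ∫ t in x0..ξ, q t := by
        apply intervalIntegral.integral_mono_on hξ (intervalIntegrable_const)
          (hqc.intervalIntegrable _ _)
        intro t ht; exact hx0 t ht.1
      simpa using h1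
    nlinarith [hsplit, hmono]
  have hfbound : ∀ ξ ≥ x0, f ξ ≤ Real.exp (2 * x0 - γ x0) * Real.exp (-(2*ξ)) := by
    intro ξ hξ
    rw [hfdef]
    rw [← Real.exp_add]
    apply Real.exp_le_exp.2
    have := hγgrow ξ hξ; linarith
  have hfint : ∀ a : ℝ, IntegrableOn f (Ioi a) := by
    intro a
    have htail : IntegrableOn f (Ioi x0) := by
      have hint : IntegrableOn (fun ξ => Real.exp (2 * x0 - γ x0) * Real.exp (-(2*ξ))) (Ioi x0) := by
        have := (exp_neg_integrableOn_Ioi x0 (by norm_num : (0:ℝ) < 2)).const_mul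
          (Real.exp (2 * x0 - γ x0))
        simpa [neg_mul, IntegrableOn] using this
      apply MeasureTheory.Integrable.mono hint (hfc.aestronglyMeasurable.restrict)
      rw [ae_restrict_iff' measurableSet_Ioi]
      filter_upwards with ξ hξ
      rw [Real.norm_eq_abs, Real.norm_eq_abs, abs_of_pos (hfpos ξ),
        abs_of_pos (by positivity)]
      exact hfbound ξ (le_of_lt hξ)
    have hmid : IntegrableOn f (Ioc a x0) := hfc.integrableOn_Ioc
    apply (hmid.union htail).mono_set
    intro t ht
    rcases le_or_gt t x0 with h | h
    · exact Or.inl ⟨ht, h⟩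
    · exact Or.inr h
  have hFpos : ∀ x : ℝ, 0 < ∫ ξ in Ioi x, f ξ := by
    intro x
    rw [setIntegral_pos_iff_support_of_nonneg_ae]
    · have : (Function.support f) = univ := by
        ext t; simp [hfdef, Function.support, Real.exp_ne_zero]
      rw [this, univ_inter, Real.volume_Ioi]
      simp
    · filter_upwards with t using (hfpos t).le
    · exact hfint x
  have hγtop : Tendsto γ atTop atTop := by
    apply tendsto_atTop_mono' atTop (eventually_atTop.2 ⟨x0, hγgrow⟩)
    apply tendsto_atTop_add_const_left
    have : Tendsto (fun ξ : ℝ => 2 * (ξ - x0)) atTop atTop := by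
      apply Tendsto.const_mul_atTop (by norm_num : (0:ℝ) < 2)
      exact tendsto_atTop_add_const_right _ _ tendsto_id
    exact this
  have hf0 : Tendsto f atTop (nhds 0) :=
    Real.tendsto_exp_atBot.comp (tendsto_neg_atBot_iff.2 hγtop)
  -- derivative of F and of M
  have hsplitI : ∀ a b : ℝ, a ≤ b →
      (∫ ξ in Ioi a, f ξ) = (∫ ξ in Ioc a b, f ξ) + ∫ ξ in Ioi b, f ξ := by
    intro a b hab
    rw [← Ioc_union_Ioi_eq_Ioi hab, setIntegral_union (Ioc_disjoint_Ioi le_rfl)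
      measurableSet_Ioi ((hfint a).mono_set Ioc_subset_Ioi_self) (hfint b)]
  have hFeq : ∀ y : ℝ, (∫ ξ in Ioi y, f ξ) = (∫ ξ in Ioi (0:ℝ), f ξ) - ∫ t in (0:ℝ)..y, f t := by
    intro y
    rcases le_total 0 y with h | h
    · rw [hsplitI 0 y h, intervalIntegral.integral_of_le h,
        MeasureTheory.integral_Ioc_eq_integral_Ioo,
        ← MeasureTheory.integral_Ioc_eq_integral_Ioo]
      ring
    · rw [hsplitI y 0 h, intervalIntegral.integral_of_ge h,
        MeasureTheory.integral_Ioc_eq_integral_Ioo,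
        ← MeasureTheory.integral_Ioc_eq_integral_Ioo]
      ring
  have hFd : ∀ x : ℝ, HasDerivAt (fun y => ∫ ξ in Ioi y, f ξ) (-(f x)) x := by
    intro x
    have h1 : HasDerivAt (fun y => ∫ t in (0:ℝ)..y, f t) (f x) x :=
      intervalIntegral.integral_hasDerivAt_right (hfc.intervalIntegrable 0 x)
        (hfc.stronglyMeasurableAtFilter _ _) hfc.continuousAt
    have h2 : HasDerivAt (fun y => (∫ ξ in Ioi (0:ℝ), f ξ) - ∫ t in (0:ℝ)..y, f t) (-(f x)) x := by
      have h3 := (hasDerivAt_const x (∫ ξ in Ioi (0:ℝ), f ξ)).sub h1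
      simp only [zero_sub] at h3; exact h3
    exact h2.congr_of_eventuallyEq (Filter.Eventually.of_forall fun y => hFeq y)
  have hMd : ∀ x : ℝ, HasDerivAt (fun y => -2 * Real.exp (γ y) * ∫ ξ in Ioi y, f ξ)
      (2 * q x * (-2 * Real.exp (γ x) * ∫ ξ in Ioi x, f ξ) + 2) x := by
    intro x
    have h1 : HasDerivAt (fun y => -2 * Real.exp (γ y)) (-2 * (Real.exp (γ x) * (2 * q x))) x :=
      ((hγd x).exp).const_mul (-2)
    have h2 := h1.mul (hFd x)
    convert h2 using 1; rfl; rfl; rfl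
    have hexp : Real.exp (γ x) * f x = 1 := by
      rw [hfdef]; rw [← Real.exp_add]; simp
    ring_nf
    nlinarith [hexp]
  -- choice of constants
  obtain ⟨C0, hC0⟩ := hq'
  obtain ⟨x2, hx2⟩ : ∃ x2 : ℝ, ∀ x ≥ x2, |deriv q x| / q x ≤ C0 := eventually_atTop.1 hC0
  set C : ℝ := max C0 1 with hCdef
  have hC1 : 1 ≤ C := le_max_right _ _
  obtain ⟨x3, hx3⟩ : ∃ x3 : ℝ, ∀ ξ ≥ x3, max 1 (2*C) ≤ q ξ :=
    (hqtop.eventually_ge_atTop (max 1 (2*C))).exists_forall_of_atTop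
  set x1 : ℝ := max 0 (max x0 (max x2 x3)) with hx1def
  have hx1_0 : (0:ℝ) ≤ x1 := le_max_left _ _
  have hq1 : ∀ ξ ≥ x1, 1 ≤ q ξ := by
    intro ξ hξ
    exact le_trans (le_max_left _ _) (hx3 ξ (le_trans (le_trans (le_trans (le_max_right _ _)
      (le_max_right _ _)) (le_max_right _ _)) hξ))
  have hq2C : ∀ ξ ≥ x1, 2 * C ≤ q ξ := by
    intro ξ hξ
    exact le_trans (le_max_right _ _) (hx3 ξ (le_trans (le_trans (le_trans (le_max_right _ _)
      (le_max_right _ _)) (le_max_right _ _)) hξ))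
  have hq'b : ∀ ξ ≥ x1, |deriv q ξ| ≤ C * q ξ := by
    intro ξ hξ
    have hqpos : (0:ℝ) < q ξ := by nlinarith [hq1 ξ hξ]
    have h1 : |deriv q ξ| / q ξ ≤ C0 := hx2 ξ (le_trans (le_trans (le_trans (le_max_left _ _)
      (le_max_right _ _)) (le_max_right _ _)) hξ)
    rw [div_le_iff₀ hqpos] at h1
    have : C0 ≤ C := le_max_left _ _
    nlinarith
  have hqne : ∀ ξ ≥ x1, q ξ ≠ 0 := fun ξ hξ => by nlinarith [hq1 ξ hξ]
  -- generic integrability helper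
  have haux : ∀ (h : ℝ → ℝ) (M : ℝ), ContinuousOn h (Ici x1) → (∀ ξ ≥ x1, |h ξ| ≤ M) →
      ∀ x ≥ x1, IntegrableOn (fun ξ => h ξ * f ξ) (Ioi x) := by
    intro h M hc hb x hx
    have hM : 0 ≤ M := le_trans (abs_nonneg _) (hb x1 le_rfl)
    apply ((hfint x).const_mul M).mono
    · exact (((hc.mono (Ici_subset_Ici.2 hx)).mono Ioi_subset_Ici_self).aestronglyMeasurable
        measurableSet_Ioi).mul (hfc.aestronglyMeasurable.restrict)
    · rw [ae_restrict_iff' measurableSet_Ioi]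
      filter_upwards with ξ hξ
      have hbb := hb ξ (le_trans hx (le_of_lt hξ))
      rw [Real.norm_eq_abs, Real.norm_eq_abs, abs_mul, abs_mul,
        abs_of_pos (hfpos ξ), abs_of_nonneg hM]
      exact mul_le_mul_of_nonneg_right hbb (hfpos ξ).le
  -- continuity of the coefficient functions on Ici x1
  have hc1 : ContinuousOn (fun ξ => deriv q ξ / q ξ ^ 2) (Ici x1) :=
    hq'c.continuousOn.div (hqc.pow 2).continuousOn (fun ξ hξ => pow_ne_zero 2 (hqne ξ hξ))
  have hc2 : ContinuousOn (fun ξ => 1 / q ξ) (Ici x1) :=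
    continuousOn_const.div hqc.continuousOn (fun ξ hξ => hqne ξ hξ)
  have hc3 : ContinuousOn (fun ξ => deriv q ξ / q ξ ^ 3) (Ici x1) :=
    hq'c.continuousOn.div (hqc.pow 3).continuousOn (fun ξ hξ => pow_ne_zero 3 (hqne ξ hξ))
  -- bounds for the coefficients
  have hb1 : ∀ ξ ≥ x1, |deriv q ξ / q ξ ^ 2| ≤ C / q ξ := by
    intro ξ hξ
    rw [abs_div, abs_of_pos (by nlinarith [hq1 ξ hξ] : (0:ℝ) < q ξ ^ 2)]
    rw [div_le_div_iff₀ (by nlinarith [hq1 ξ hξ]) (by nlinarith [hq1 ξ hξ])]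
    have := hq'b ξ hξ
    nlinarith [hq1 ξ hξ, abs_nonneg (deriv q ξ)]
  have hb1' : ∀ ξ ≥ x1, |deriv q ξ / q ξ ^ 2| ≤ C := fun ξ hξ => by
    have h1 := hb1 ξ hξ
    have h2 : C / q ξ ≤ C := by
      rw [div_le_iff₀ (by nlinarith [hq1 ξ hξ])]
      nlinarith [hq1 ξ hξ]
    linarith
  have hb2 : ∀ ξ ≥ x1, |1 / q ξ| ≤ 1 := fun ξ hξ => by
    have hqpos : (0:ℝ) < q ξ := by nlinarith [hq1 ξ hξ]
    rw [abs_of_pos (by positivity)]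
    rw [div_le_one hqpos]; exact hq1 ξ hξ
  have hb3 : ∀ ξ ≥ x1, |deriv q ξ / q ξ ^ 3| ≤ 1 / 2 * (1 / q ξ) := by
    intro ξ hξ
    have hqpos : (0:ℝ) < q ξ := by nlinarith [hq1 ξ hξ]
    rw [abs_div, abs_of_pos (by positivity : (0:ℝ) < q ξ ^ 3)]
    rw [div_le_iff₀ (by positivity)]
    have h2C := hq2C ξ hξ
    have := hq'b ξ hξ
    have hC0 : 0 < C := by linarith
    -- |q'| ≤ C q ≤ (q/2) q, and 1/2*(1/q)*q^3 = q^2/2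
    have : |deriv q ξ| ≤ q ξ * q ξ / 2 := by nlinarith
    calc |deriv q ξ| ≤ q ξ * q ξ / 2 := this
      _ = 1 / 2 * (1 / q ξ) * q ξ ^ 3 := by field_simp
  -- FTC (a)
  have hFTCa : ∀ x ≥ x1, ∫ ξ in Ioi x, (2 * f ξ + deriv q ξ / q ξ ^ 2 * f ξ) = f x / q x := by
    intro x hx
    have hqd : ∀ ξ, HasDerivAt q (deriv q ξ) ξ := fun ξ =>
      ((hq.differentiable one_ne_zero) ξ).hasDerivAt
    have hder : ∀ ξ ∈ Ici x, HasDerivAt (fun t => -(f t / q t))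
        (2 * f ξ + deriv q ξ / q ξ ^ 2 * f ξ) ξ := by
      intro ξ hξ
      have hξ1 : ξ ≥ x1 := le_trans hx hξ
      have h := ((hfd ξ).div (hqd ξ) (hqne ξ hξ1)).neg
      convert h using 1; rfl; rfl; rfl
      have := hqne ξ hξ1
      field_simp
      ring
    have hintg : IntegrableOn (fun ξ => 2 * f ξ + deriv q ξ / q ξ ^ 2 * f ξ) (Ioi x) := by
      exact ((hfint x).const_mul 2).add (haux _ C hc1 hb1' x hx)
    have htend : Tendsto (fun ξ => -(f ξ / q ξ)) atTop (nhds 0) := by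
      apply squeeze_zero_norm' _ hf0
      filter_upwards [eventually_ge_atTop x1] with ξ hξ
      have hqpos : (0:ℝ) < q ξ := by nlinarith [hq1 ξ hξ]
      rw [Real.norm_eq_abs, abs_neg, abs_div, abs_of_pos (hfpos ξ), abs_of_pos hqpos]
      rw [div_le_iff₀ hqpos]
      nlinarith [hq1 ξ hξ, (hfpos ξ).le]
    have := integral_Ioi_of_hasDerivAt_of_tendsto' hder hintg htend
    rw [this]; ring
  -- FTC (b)
  have hFTCb : ∀ x ≥ x1, ∫ ξ in Ioi x, (f ξ / q ξ + deriv q ξ / q ξ ^ 3 * f ξ)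
      = f x / (2 * q x ^ 2) := by
    intro x hx
    have hqd : ∀ ξ, HasDerivAt q (deriv q ξ) ξ := fun ξ =>
      ((hq.differentiable one_ne_zero) ξ).hasDerivAt
    have hder : ∀ ξ ∈ Ici x, HasDerivAt (fun t => -(f t / (2 * q t ^ 2)))
        (f ξ / q ξ + deriv q ξ / q ξ ^ 3 * f ξ) ξ := by
      intro ξ hξ
      have hξ1 : ξ ≥ x1 := le_trans hx hξ
      have hden : HasDerivAt (fun t => 2 * q t ^ 2) (2 * (2 * q ξ ^ 1 * deriv q ξ)) ξ :=
        ((hqd ξ).pow 2).const_mul 2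
      have hne2 : 2 * q ξ ^ 2 ≠ 0 := by
        have := hqne ξ hξ1; positivity
      have h := ((hfd ξ).div hden hne2).neg
      convert h using 1; rfl; rfl; rfl
      have := hqne ξ hξ1
      field_simp
      ring
    have hintg : IntegrableOn (fun ξ => f ξ / q ξ + deriv q ξ / q ξ ^ 3 * f ξ) (Ioi x) := by
      have h1 : IntegrableOn (fun ξ => (1 / q ξ) * f ξ) (Ioi x) := haux _ 1 hc2 hb2 x hx
      have h2 : IntegrableOn (fun ξ => deriv q ξ / q ξ ^ 3 * f ξ) (Ioi x) := by
        apply haux _ C hc3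
        · intro ξ hξ
          have := hb3 ξ hξ
          have h2 : 1 / 2 * (1 / q ξ) ≤ C := by
            have := hb2 ξ hξ
            have hqpos : (0:ℝ) < q ξ := by nlinarith [hq1 ξ hξ]
            rw [abs_of_pos (by positivity)] at this
            nlinarith
          linarith
        · exact hx
      have h1' : IntegrableOn (fun ξ => f ξ / q ξ) (Ioi x) := by
        apply h1.congr_fun _ measurableSet_Ioi
        intro ξ _; ring
      exact h1'.add h2
    have htend : Tendsto (fun ξ => -(f ξ / (2 * q ξ ^ 2))) atTop (nhds 0) := by
      apply squeeze_zero_norm' _ hf0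
      filter_upwards [eventually_ge_atTop x1] with ξ hξ
      have hqpos : (0:ℝ) < q ξ := by nlinarith [hq1 ξ hξ]
      rw [Real.norm_eq_abs, abs_neg, abs_div, abs_of_pos (hfpos ξ),
        abs_of_pos (by positivity : (0:ℝ) < 2 * q ξ ^ 2)]
      rw [div_le_iff₀ (by positivity)]
      have hsq : 1 ≤ q ξ ^ 2 := by nlinarith [hq1 ξ hξ]
      nlinarith [hsq, hfpos ξ]
    have := integral_Ioi_of_hasDerivAt_of_tendsto' hder hintg htend
    rw [this]; ring
  -- split FTCa
  have hRsplit : ∀ x ≥ x1, (∫ ξ in Ioi x, deriv q ξ / q ξ ^ 2 * f ξ)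
      = f x / q x - 2 * ∫ ξ in Ioi x, f ξ := by
    intro x hx
    have hadd := integral_add ((hfint x).const_mul 2) (haux _ C hc1 hb1' x hx)
    rw [hFTCa x hx] at hadd
    rw [integral_const_mul] at hadd
    linarith
  -- identity in goal form
  have hident : ∀ x ≥ x1, -2 * Real.exp (γ x) * (∫ ξ in Ioi x, f ξ)
      = -(1 / q x) + Real.exp (γ x) * ∫ ξ in Ioi x, deriv q ξ / q ξ ^ 2 * f ξ := by
    intro x hx
    rw [hRsplit x hx]
    have hexp : Real.exp (γ x) * f x = 1 := by
      rw [hfdef]; rw [← Real.exp_add]; simp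
    have hqx : q x ≠ 0 := hqne x hx
    field_simp
    nlinarith [hexp]
  -- split FTCb and bound g
  have hgbound : ∀ x ≥ x1, (∫ ξ in Ioi x, f ξ / q ξ) ≤ f x / q x ^ 2 := by
    intro x hx
    have h1' : IntegrableOn (fun ξ => f ξ / q ξ) (Ioi x) := by
      apply (haux _ 1 hc2 hb2 x hx).congr_fun _ measurableSet_Ioi
      intro ξ _; ring
    have h2 : IntegrableOn (fun ξ => deriv q ξ / q ξ ^ 3 * f ξ) (Ioi x) := by
      apply haux _ C hc3 _ x hx
      intro ξ hξ
      have := hb3 ξ hξ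
      have hqpos : (0:ℝ) < q ξ := by nlinarith [hq1 ξ hξ]
      have h2 : 1 / 2 * (1 / q ξ) ≤ C := by
        have h3 := hb2 ξ hξ
        rw [abs_of_pos (by positivity)] at h3
        nlinarith
      linarith
    have hadd := integral_add h1' h2
    rw [hFTCb x hx] at hadd
    have hT : |∫ ξ in Ioi x, deriv q ξ / q ξ ^ 3 * f ξ|
        ≤ 1 / 2 * ∫ ξ in Ioi x, f ξ / q ξ := by
      have h5 : |∫ ξ in Ioi x, deriv q ξ / q ξ ^ 3 * f ξ|
          ≤ ∫ ξ in Ioi x, |deriv q ξ / q ξ ^ 3 * f ξ| := by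
        simpa only [Real.norm_eq_abs] using
          norm_integral_le_integral_norm (μ := volume.restrict (Ioi x))
            (fun ξ => deriv q ξ / q ξ ^ 3 * f ξ)
      refine le_trans h5 ?_
      rw [show (1:ℝ)/2 * ∫ ξ in Ioi x, f ξ / q ξ = ∫ ξ in Ioi x, 1/2 * (f ξ / q ξ) by
        rw [integral_const_mul]]
      apply integral_mono_ae h2.abs (h1'.const_mul _)
      rw [EventuallyLE, ae_restrict_iff' measurableSet_Ioi]
      filter_upwards with ξ hξ
      have hξ1 : ξ ≥ x1 := le_trans hx hξ.le
      have hqpos : (0:ℝ) < q ξ := by nlinarith [hq1 ξ hξ1]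
      rw [abs_mul, abs_of_pos (hfpos ξ)]
      have := hb3 ξ hξ1
      calc |deriv q ξ / q ξ ^ 3| * f ξ ≤ 1/2 * (1/q ξ) * f ξ :=
            mul_le_mul_of_nonneg_right this (hfpos ξ).le
        _ = 1/2 * (f ξ / q ξ) := by ring
    have habs := abs_le.1 hT
    have hhalf : f x / (2 * q x ^ 2) = 1/2 * (f x / q x ^ 2) := by ring
    linarith [hadd, habs.1]
  -- bound R
  have hRbound : ∀ x ≥ x1, |∫ ξ in Ioi x, deriv q ξ / q ξ ^ 2 * f ξ|
      ≤ C * (f x / q x ^ 2) := by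
    intro x hx
    have h2 := haux _ C hc1 hb1' x hx
    have h1' : IntegrableOn (fun ξ => f ξ / q ξ) (Ioi x) := by
      apply (haux _ 1 hc2 hb2 x hx).congr_fun _ measurableSet_Ioi
      intro ξ _; ring
    have h5 : |∫ ξ in Ioi x, deriv q ξ / q ξ ^ 2 * f ξ|
        ≤ ∫ ξ in Ioi x, |deriv q ξ / q ξ ^ 2 * f ξ| := by
      simpa only [Real.norm_eq_abs] using
        norm_integral_le_integral_norm (μ := volume.restrict (Ioi x))
          (fun ξ => deriv q ξ / q ξ ^ 2 * f ξ)
    have h6 : (∫ ξ in Ioi x, |deriv q ξ / q ξ ^ 2 * f ξ|)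
        ≤ ∫ ξ in Ioi x, C * (f ξ / q ξ) := by
      apply integral_mono_ae h2.abs (h1'.const_mul _)
      rw [EventuallyLE, ae_restrict_iff' measurableSet_Ioi]
      filter_upwards with ξ hξ
      have hξ1 : ξ ≥ x1 := le_trans hx hξ.le
      have hqpos : (0:ℝ) < q ξ := by nlinarith [hq1 ξ hξ1]
      rw [abs_mul, abs_of_pos (hfpos ξ)]
      have := hb1 ξ hξ1
      calc |deriv q ξ / q ξ ^ 2| * f ξ ≤ C / q ξ * f ξ :=
            mul_le_mul_of_nonneg_right this (hfpos ξ).le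
        _ = C * (f ξ / q ξ) := by ring
    rw [integral_const_mul] at h6
    have h7 := hgbound x hx
    have hC0 : (0:ℝ) < C := by linarith
    nlinarith [h5, h6, h7]
  -- tail estimate
  have htail : ∀ x ≥ x1, |2 * q x * (-2 * Real.exp (γ x) * ∫ ξ in Ioi x, f ξ) + 2|
      ≤ 4 * C * |(-2 * Real.exp (γ x) * ∫ ξ in Ioi x, f ξ)| := by
    intro x hx
    have hC0 : (0:ℝ) < C := by linarith
    have hQ1 : 1 ≤ q x := hq1 x hx
    have hQ2C : 2 * C ≤ q x := hq2C x hx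
    have hQpos : (0:ℝ) < q x := by linarith
    have hEpos : (0:ℝ) < Real.exp (γ x) := Real.exp_pos _
    have hepos : (0:ℝ) < f x := hfpos x
    have hEe : Real.exp (γ x) * f x = 1 := by
      rw [hfdef]; rw [← Real.exp_add]; simp
    have hR := hRbound x hx
    have hRs := hRsplit x hx
    have hid := hident x hx
    have hFlb : f x / (4 * q x) ≤ ∫ ξ in Ioi x, f ξ := by
      have h1 : C * (f x / q x ^ 2) ≤ f x / (2 * q x) := by
        rw [mul_div_assoc', div_le_div_iff₀ (by positivity) (by positivity)]
        nlinarith [mul_le_mul_of_nonneg_right hQ2C (mul_nonneg hepos.le hQpos.le)]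
      have h2 := (abs_le.1 hR).2
      have h3 : f x / q x - f x / (2 * q x) = 2 * (f x / (4 * q x)) := by
        field_simp; ring
      linarith
    have hnum : 2 * q x * (-2 * Real.exp (γ x) * ∫ ξ in Ioi x, f ξ) + 2
        = 2 * q x * Real.exp (γ x) * ∫ ξ in Ioi x, deriv q ξ / q ξ ^ 2 * f ξ := by
      rw [hid]
      have hQne : q x ≠ 0 := ne_of_gt hQpos
      field_simp
      ring
    rw [hnum]
    have habs1 : |2 * q x * Real.exp (γ x) * ∫ ξ in Ioi x, deriv q ξ / q ξ ^ 2 * f ξ|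
        = 2 * q x * Real.exp (γ x) * |∫ ξ in Ioi x, deriv q ξ / q ξ ^ 2 * f ξ| := by
      rw [abs_mul, abs_of_pos (by positivity : (0:ℝ) < 2 * q x * Real.exp (γ x))]
    rw [habs1]
    have hub : 2 * q x * Real.exp (γ x) * |∫ ξ in Ioi x, deriv q ξ / q ξ ^ 2 * f ξ|
        ≤ 2 * C / q x := by
      have h3 : 2 * q x * Real.exp (γ x) * (C * (f x / q x ^ 2))
          = 2 * C * (Real.exp (γ x) * f x) / q x := by
        field_simp
      calc 2 * q x * Real.exp (γ x) * |∫ ξ in Ioi x, deriv q ξ / q ξ ^ 2 * f ξ|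
          ≤ 2 * q x * Real.exp (γ x) * (C * (f x / q x ^ 2)) :=
            mul_le_mul_of_nonneg_left hR (by positivity)
        _ = 2 * C * (Real.exp (γ x) * f x) / q x := h3
        _ = 2 * C / q x := by rw [hEe]; ring
    have hMabs : |(-2 * Real.exp (γ x) * ∫ ξ in Ioi x, f ξ)|
        = 2 * Real.exp (γ x) * ∫ ξ in Ioi x, f ξ := by
      rw [abs_of_neg (by nlinarith [hFpos x, hEpos] : (-2 * Real.exp (γ x) * ∫ ξ in Ioi x, f ξ) < 0)]
      ring
    rw [hMabs]
    have h4 : 1 / (2 * q x) ≤ 2 * Real.exp (γ x) * ∫ ξ in Ioi x, f ξ := by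
      have h5 : 2 * Real.exp (γ x) * (f x / (4 * q x)) = 1 / (2 * q x) := by
        field_simp
        nlinarith [hEe]
      calc 1 / (2 * q x) = 2 * Real.exp (γ x) * (f x / (4 * q x)) := h5.symm
        _ ≤ 2 * Real.exp (γ x) * ∫ ξ in Ioi x, f ξ :=
            mul_le_mul_of_nonneg_left hFlb (by positivity)
    have h6 : 2 * C / q x = 4 * C * (1 / (2 * q x)) := by field_simp; ring
    calc 2 * q x * Real.exp (γ x) * |∫ ξ in Ioi x, deriv q ξ / q ξ ^ 2 * f ξ|
        ≤ 2 * C / q x := hub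
      _ = 4 * C * (1 / (2 * q x)) := h6
      _ ≤ 4 * C * (2 * Real.exp (γ x) * ∫ ξ in Ioi x, f ξ) :=
          mul_le_mul_of_nonneg_left h4 (by positivity)
  -- continuity of M and the ratio on the compact part
  have hFcont : Continuous (fun y => ∫ ξ in Ioi y, f ξ) := by
    have : Differentiable ℝ (fun y => ∫ ξ in Ioi y, f ξ) := fun y => (hFd y).differentiableAt
    exact this.continuous
  have hMcont : Continuous (fun y => -2 * Real.exp (γ y) * ∫ ξ in Ioi y, f ξ) :=
    (continuous_const.mul (Real.continuous_exp.comp hγc)).mul hFcont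
  have hMne : ∀ x : ℝ, (-2 * Real.exp (γ x) * ∫ ξ in Ioi x, f ξ) ≠ 0 := by
    intro x
    have := hFpos x
    have := Real.exp_pos (γ x)
    nlinarith
  have hrcont : Continuous (fun x => |2 * q x * (-2 * Real.exp (γ x) * ∫ ξ in Ioi x, f ξ) + 2|
      / |(-2 * Real.exp (γ x) * ∫ ξ in Ioi x, f ξ)|) := by
    apply Continuous.div
    · exact (((continuous_const.mul hqc).mul hMcont).add continuous_const).abs
    · exact hMcont.abs
    · intro x
      exact abs_ne_zero.2 (hMne x)
  obtain ⟨z, hz, hB⟩ := (isCompact_Icc (a := (0:ℝ)) (b := x1)).exists_isMaxOn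
    (nonempty_Icc.2 hx1_0) (hrcont.continuousOn)
  set B : ℝ := |2 * q z * (-2 * Real.exp (γ z) * ∫ ξ in Ioi z, f ξ) + 2|
      / |(-2 * Real.exp (γ z) * ∫ ξ in Ioi z, f ξ)| with hBdef
  set G : ℝ := max B (4 * C) + 1 with hGdef
  have hC0 : (0:ℝ) < C := by linarith
  have hBG : B ≤ G := by
    have := le_max_left B (4*C); rw [hGdef]; linarith
  have hCG : 4 * C ≤ G := by
    have := le_max_right B (4*C); rw [hGdef]; linarith
  have hGpos : (0:ℝ) < G := by linarith
  constructor
  · filter_upwards [eventually_ge_atTop x1] with x hx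
    exact hident x hx
  · refine ⟨G, hGpos, ?_⟩
    intro x hx
    have hderiv : deriv (fun y => -2 * Real.exp (γ y) * ∫ ξ in Ioi y, f ξ) x
        = 2 * q x * (-2 * Real.exp (γ x) * ∫ ξ in Ioi x, f ξ) + 2 := (hMd x).deriv
    rw [hderiv]
    rcases le_total x x1 with h | h
    · have hmem : x ∈ Icc (0:ℝ) x1 := ⟨hx, h⟩
      have h1 : |2 * q x * (-2 * Real.exp (γ x) * ∫ ξ in Ioi x, f ξ) + 2|
          / |(-2 * Real.exp (γ x) * ∫ ξ in Ioi x, f ξ)| ≤ B := hB hmem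
      have h2 : |2 * q x * (-2 * Real.exp (γ x) * ∫ ξ in Ioi x, f ξ) + 2|
          ≤ B * |(-2 * Real.exp (γ x) * ∫ ξ in Ioi x, f ξ)| := by
        rw [div_le_iff₀ (abs_pos.2 (hMne x))] at h1
        linarith [h1]
      calc |2 * q x * (-2 * Real.exp (γ x) * ∫ ξ in Ioi x, f ξ) + 2|
          ≤ B * |(-2 * Real.exp (γ x) * ∫ ξ in Ioi x, f ξ)| := h2
        _ ≤ G * |(-2 * Real.exp (γ x) * ∫ ξ in Ioi x, f ξ)| :=
            mul_le_mul_of_nonneg_right hBG (abs_nonneg _)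
    · calc |2 * q x * (-2 * Real.exp (γ x) * ∫ ξ in Ioi x, f ξ) + 2|
          ≤ 4 * C * |(-2 * Real.exp (γ x) * ∫ ξ in Ioi x, f ξ)| := htail x h
        _ ≤ G * |(-2 * Real.exp (γ x) * ∫ ξ in Ioi x, f ξ)| :=
            mul_le_mul_of_nonneg_right hCG (abs_nonneg _)
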